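/- arXiv:0905.2745 — 4 statements merged into one kernel-verified Lean document; each statement's English description precedes it below -/
import Mathlib

section
/- Let p₁, p₂ ∈ L be divisible by u. For n ≥ 0 let Γ_n(p) := {(a,b) ∈ (ℂ[z][u]/(u^{n+1}))² : zʲ·a + p·b and z⁻ʲ·b are V-holomorphic modulo u^{n+1}}. Then the function Δ_n(p₁,p₂) := dim_ℂ Γ_n(p₁) − dim_ℂ Γ_n(p₂) is eventually constant in n; i.e. there exists N such that Δ_n(p₁,p₂) = Δ_N(p₁,p₂) for all n ≥ N. -/
noncomputable section

/-- `L = ℂ[z,z⁻¹][u]`: Laurent polynomials in `z` with polynomial coefficients in `u`,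
realised as the algebra of finitely supported ℂ-linear combinations of monomials on the
exponent monoid `ℤ × ℕ`, where `(s, r)` is the exponent of the monomial `zˢuʳ`. -/
abbrev L : Type := AddMonoidAlgebra ℂ (ℤ × ℕ)

/-- The monomial `zˢ` (`s ∈ ℤ`). -/
def zp (s : ℤ) : L := AddMonoidAlgebra.single (s, 0) 1

/-- The monomial `u`. -/
def uu : L := AddMonoidAlgebra.single (0, 1) 1

/-- `f` is V-holomorphic: every monomial `zˢuʳ` occurring in `f` satisfies `s ≤ k·r`,
i.e. `f` is holomorphic in the coordinates `(z⁻¹, zᵏu)` of the chart `V` of `Z_k`. -/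
def VHol (k : ℕ) (f : L) : Prop := ∀ (s : ℤ) (r : ℕ), f.coeff (s, r) ≠ 0 → s ≤ (k : ℤ) * r

/-- `f` lies in `ℂ[z,u] ⊆ L`, i.e. is holomorphic on the chart `U`. -/
def MemPolyRing (f : L) : Prop := ∀ (s : ℤ) (r : ℕ), f.coeff (s, r) ≠ 0 → 0 ≤ s

/-- Sections of the bundle `E` determined by `(j,p)` over the n-th infinitesimal neighbourhood
of the zero section: pairs `(a,b)` of polynomials in `ℂ[z][u]/(u^{n+1})` (represented by their
canonical representatives, supported in u-degrees `≤ n`) such that `zʲ·a + p·b` and `z⁻ʲ·b`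
are V-holomorphic modulo `u^{n+1}`. -/
def GammaSet (k j n : ℕ) (p : L) : Set (L × L) :=
  {x | MemPolyRing x.1 ∧ MemPolyRing x.2 ∧
       (∀ (s : ℤ) (r : ℕ), n < r → x.1.coeff (s, r) = 0) ∧
       (∀ (s : ℤ) (r : ℕ), n < r → x.2.coeff (s, r) = 0) ∧
       (∀ (s : ℤ) (r : ℕ), r ≤ n → (zp (j : ℤ) * x.1 + p * x.2).coeff (s, r) ≠ 0 → s ≤ (k : ℤ) * r) ∧
       (∀ (s : ℤ) (r : ℕ), r ≤ n → (zp (-(j : ℤ)) * x.2).coeff (s, r) ≠ 0 → s ≤ (k : ℤ) * r)}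

/-- `Γ_n(p) = H⁰(ℓ⁽ⁿ⁾; E⁽ⁿ⁾)` as a ℂ-subspace of `L × L` (the set `GammaSet` is a subspace,
realised here as its span). -/
def Gamma (k j n : ℕ) (p : L) : Submodule ℂ (L × L) := Submodule.span ℂ (GammaSet k j n p)

/-! ### Auxiliary machinery -/

open Module

open scoped Classical

private lemma add_ne_aux {a b : ℂ} (h : a + b ≠ 0) : a ≠ 0 ∨ b ≠ 0 := by
  by_contra hc
  push_neg at hc
  rw [hc.1, hc.2, add_zero] at h
  exact h rfl

/-- Coefficient of a product with a `z`-monomial. -/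
lemma zp_mul_apply (d : ℤ) (f : L) (s : ℤ) (r : ℕ) : (zp d * f).coeff (s, r) = f.coeff (s - d, r) := by
  rw [zp]
  rw [AddMonoidAlgebra.coeff_single_mul_eq_mul_coeff (x := f) (r := (1:ℂ)) (m := ((d : ℤ), (0:ℕ)))
      (m₁ := (s, r)) (m₂ := (s - d, r)), one_mul]
  intro a _
  constructor
  · intro h
    have h1 : d + a.1 = s := by
      have := congrArg Prod.fst h
      simpa using this
    have h2 : a.2 = r := by
      have := congrArg Prod.snd h
      simpa using this
    have : a.1 = s - d := by omega
    exact Prod.ext this h2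
  · rintro rfl
    refine Prod.ext ?_ ?_ <;> simp

/-- Nonzero coefficients of a product come from decompositions of the exponent. -/
lemma mul_decomp (p f : L) (s : ℤ) (r : ℕ) (h : (p * f).coeff (s, r) ≠ 0) :
    ∃ s₁ s₂ r₁ r₂, p.coeff (s₁, r₁) ≠ 0 ∧ f.coeff (s₂, r₂) ≠ 0 ∧ s₁ + s₂ = s ∧ r₁ + r₂ = r := by
  classical
  have hm : (s, r) ∈ (p * f).coeff.support := Finsupp.mem_support_iff.2 h
  have hsub := AddMonoidAlgebra.support_coeff_mul_subset p f
  obtain ⟨q₁, hq₁, q₂, hq₂, hq⟩ := Finset.mem_add.1 (hsub hm)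
  refine ⟨q₁.1, q₂.1, q₁.2, q₂.2, Finsupp.mem_support_iff.1 hq₁, Finsupp.mem_support_iff.1 hq₂,
    ?_, ?_⟩
  · have := congrArg Prod.fst hq; simpa using this
  · have := congrArg Prod.snd hq; simpa using this

lemma mul_rows_zero (p g : L) (s : ℤ) (r : ℕ) (h : ∀ s' r', r' ≤ r → g.coeff (s', r') = 0) :
    (p * g).coeff (s, r) = 0 := by
  by_contra hne
  obtain ⟨s₁, s₂, r₁, r₂, _, hg, _, hr⟩ := mul_decomp p g s r hne
  exact hg (h s₂ r₂ (by omega))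

/-- Filtering coefficients is linear. -/
def filterLM (P : ℤ × ℕ → Prop) : L →ₗ[ℂ] L :=
  haveI := Classical.decPred P
  { toFun := fun f => AddMonoidAlgebra.ofCoeff (Finsupp.filter P f.coeff)
    map_add' := fun f g => by rw [AddMonoidAlgebra.coeff_add, Finsupp.filter_add]; rfl
    map_smul' := fun c f => by rw [AddMonoidAlgebra.coeff_smul, Finsupp.filter_smul]; rfl }

lemma filterLM_apply (P : ℤ × ℕ → Prop) (f : L) (q : ℤ × ℕ) :
    (filterLM P f).coeff q = if P q then f.coeff q else 0 := by
  rw [filterLM]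
  simp only [LinearMap.coe_mk, AddHom.coe_mk, AddMonoidAlgebra.coeff_ofCoeff]
  rw [Finsupp.filter_apply]

/-- Truncation at `u`-degree `≤ N`. -/
def truncL (N : ℕ) : L →ₗ[ℂ] L := filterLM (fun t => t.2 ≤ N)

lemma truncL_apply (N : ℕ) (f : L) (s : ℤ) (r : ℕ) :
    (truncL N f).coeff (s, r) = if r ≤ N then f.coeff (s, r) else 0 := by
  rw [truncL, filterLM_apply]
  by_cases h : r ≤ N <;> simp [h]

lemma truncL_eq_zero_iff (N : ℕ) (f : L) :
    truncL N f = 0 ↔ ∀ (s : ℤ) (r : ℕ), r ≤ N → f.coeff (s, r) = 0 := by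
  constructor
  · intro h s r hr
    have := congrArg (fun g : L => g.coeff (s, r)) h
    rw [truncL_apply] at this
    simpa [hr] using this
  · intro h
    ext q
    obtain ⟨s, r⟩ := q
    rw [truncL_apply]
    split_ifs with hr
    · simpa using h s r hr
    · simp

lemma truncL_eq_self (N : ℕ) (f : L) (h : ∀ (s : ℤ) (r : ℕ), N < r → f.coeff (s, r) = 0) :
    truncL N f = f := by
  ext q
  obtain ⟨s, r⟩ := q
  rw [truncL_apply]
  split_ifs with hr
  · rfl
  · exact (h s r (by omega)).symm

/-- `GammaSet` as a submodule. -/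
def GammaSub (k j n : ℕ) (p : L) : Submodule ℂ (L × L) where
  carrier := GammaSet k j n p
  zero_mem' := by
    refine ⟨?_, ?_, ?_, ?_, ?_, ?_⟩ <;> intro s r <;> simp
  add_mem' := by
    rintro x y ⟨hx1, hx2, hx3, hx4, hx5, hx6⟩ ⟨hy1, hy2, hy3, hy4, hy5, hy6⟩
    have hre : zp (j : ℤ) * (x + y).1 + p * (x + y).2
        = (zp (j : ℤ) * x.1 + p * x.2) + (zp (j : ℤ) * y.1 + p * y.2) := by
      simp only [Prod.fst_add, Prod.snd_add, mul_add]; ring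
    have hre2 : zp (-(j : ℤ)) * (x + y).2
        = (zp (-(j : ℤ)) * x.2) + (zp (-(j : ℤ)) * y.2) := by
      simp only [Prod.snd_add, mul_add]
    refine ⟨?_, ?_, ?_, ?_, ?_, ?_⟩
    · intro s r h
      rw [Prod.fst_add, AddMonoidAlgebra.coeff_add, Finsupp.add_apply] at h
      rcases add_ne_aux h with h' | h'
      · exact hx1 s r h'
      · exact hy1 s r h'
    · intro s r h
      rw [Prod.snd_add, AddMonoidAlgebra.coeff_add, Finsupp.add_apply] at h
      rcases add_ne_aux h with h' | h'
      · exact hx2 s r h'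
      · exact hy2 s r h'
    · intro s r hr
      rw [Prod.fst_add, AddMonoidAlgebra.coeff_add, Finsupp.add_apply, hx3 s r hr, hy3 s r hr, add_zero]
    · intro s r hr
      rw [Prod.snd_add, AddMonoidAlgebra.coeff_add, Finsupp.add_apply, hx4 s r hr, hy4 s r hr, add_zero]
    · intro s r hr h
      rw [hre, AddMonoidAlgebra.coeff_add, Finsupp.add_apply] at h
      rcases add_ne_aux h with h' | h'
      · exact hx5 s r hr h'
      · exact hy5 s r hr h'
    · intro s r hr h
      rw [hre2, AddMonoidAlgebra.coeff_add, Finsupp.add_apply] at h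
      rcases add_ne_aux h with h' | h'
      · exact hx6 s r hr h'
      · exact hy6 s r hr h'
  smul_mem' := by
    rintro c x ⟨hx1, hx2, hx3, hx4, hx5, hx6⟩
    have hre : zp (j : ℤ) * (c • x).1 + p * (c • x).2
        = c • (zp (j : ℤ) * x.1 + p * x.2) := by
      rw [Prod.smul_fst, Prod.smul_snd, mul_smul_comm, mul_smul_comm, smul_add]
    have hre2 : zp (-(j : ℤ)) * (c • x).2 = c • (zp (-(j : ℤ)) * x.2) := by
      rw [Prod.smul_snd, mul_smul_comm]
    refine ⟨?_, ?_, ?_, ?_, ?_, ?_⟩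
    · intro s r h
      rw [Prod.smul_fst, AddMonoidAlgebra.coeff_smul_apply, smul_eq_mul] at h
      exact hx1 s r (right_ne_zero_of_mul h)
    · intro s r h
      rw [Prod.smul_snd, AddMonoidAlgebra.coeff_smul_apply, smul_eq_mul] at h
      exact hx2 s r (right_ne_zero_of_mul h)
    · intro s r hr
      rw [Prod.smul_fst, AddMonoidAlgebra.coeff_smul_apply, hx3 s r hr, smul_zero]
    · intro s r hr
      rw [Prod.smul_snd, AddMonoidAlgebra.coeff_smul_apply, hx4 s r hr, smul_zero]
    · intro s r hr h
      rw [hre, AddMonoidAlgebra.coeff_smul_apply, smul_eq_mul] at h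
      exact hx5 s r hr (right_ne_zero_of_mul h)
    · intro s r hr h
      rw [hre2, AddMonoidAlgebra.coeff_smul_apply, smul_eq_mul] at h
      exact hx6 s r hr (right_ne_zero_of_mul h)

lemma mem_gammaSub {k j n : ℕ} {p : L} {x : L × L} :
    x ∈ GammaSub k j n p ↔ x ∈ GammaSet k j n p := Iff.rfl

lemma Gamma_eq (k j n : ℕ) (p : L) : Gamma k j n p = GammaSub k j n p := by
  apply le_antisymm
  · exact Submodule.span_le.2 (fun x hx => hx)
  · exact fun x hx => Submodule.subset_span hx

/-- Coefficient of `zᵈ·a + p·b`. -/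
lemma coeff_comb (d : ℤ) (a b p : L) (s : ℤ) (r : ℕ) :
    (zp d * a + p * b).coeff (s, r) = a.coeff (s - d, r) + (p * b).coeff (s, r) := by
  rw [AddMonoidAlgebra.coeff_add, Finsupp.add_apply, zp_mul_apply]

/-! ### Finite dimensionality -/

/-- The subspace of `L` supported in the box `0 ≤ s ≤ B`, `r ≤ n`. -/
def boxMod (B : ℤ) (n : ℕ) : Submodule ℂ L where
  carrier := {f | ∀ (s : ℤ) (r : ℕ), f.coeff (s, r) ≠ 0 → 0 ≤ s ∧ s ≤ B ∧ r ≤ n}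
  zero_mem' := by intro s r h; simp at h
  add_mem' := by
    rintro f g hf hg s r h
    rw [AddMonoidAlgebra.coeff_add, Finsupp.add_apply] at h
    rcases add_ne_aux h with h' | h'
    · exact hf s r h'
    · exact hg s r h'
  smul_mem' := by
    rintro c f hf s r h
    rw [AddMonoidAlgebra.coeff_smul_apply, smul_eq_mul] at h
    exact hf s r (right_ne_zero_of_mul h)

lemma boxMod_finite (B : ℤ) (n : ℕ) : FiniteDimensional ℂ (boxMod B n) := by
  classical
  set box : Finset (ℤ × ℕ) := Finset.Icc ((0 : ℤ), (0 : ℕ)) (B, n) with hbox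
  let φ : boxMod B n →ₗ[ℂ] (box → ℂ) :=
    { toFun := fun f q => (f : L).coeff q.1
      map_add' := by intro f g; funext q; rfl
      map_smul' := by intro c f; funext q; rfl }
  apply FiniteDimensional.of_injective φ
  intro f g hfg
  apply Subtype.ext
  ext q
  obtain ⟨s, r⟩ := q
  by_cases hq : ((s, r) : ℤ × ℕ) ∈ box
  · exact congrFun hfg ⟨(s, r), hq⟩
  · have hf0 : (f : L).coeff (s, r) = 0 := by
      by_contra hne
      obtain ⟨h1, h2, h3⟩ := f.2 s r hne
      exact hq (Finset.mem_Icc.2 ⟨Prod.mk_le_mk.2 ⟨h1, Nat.zero_le _⟩, Prod.mk_le_mk.2 ⟨h2, h3⟩⟩)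
    have hg0 : (g : L).coeff (s, r) = 0 := by
      by_contra hne
      obtain ⟨h1, h2, h3⟩ := g.2 s r hne
      exact hq (Finset.mem_Icc.2 ⟨Prod.mk_le_mk.2 ⟨h1, Nat.zero_le _⟩, Prod.mk_le_mk.2 ⟨h2, h3⟩⟩)
    rw [hf0, hg0]

lemma gammaSub_finite (k j n : ℕ) (p : L) : FiniteDimensional ℂ (GammaSub k j n p) := by
  obtain ⟨M, hM⟩ : ∃ M : ℤ, ∀ q ∈ p.coeff.support, q.1 ≤ M := by
    obtain ⟨M, hM⟩ := (p.coeff.support.image Prod.fst).exists_le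
    exact ⟨M, fun q hq => hM q.1 (Finset.mem_image_of_mem _ hq)⟩
  have hMp : ∀ (s : ℤ) (r : ℕ), p.coeff (s, r) ≠ 0 → s ≤ M := by
    intro s r h
    exact hM (s, r) (Finsupp.mem_support_iff.2 h)
  set B : ℤ := (k : ℤ) * n + (j : ℤ) + max M 0 with hB
  haveI := boxMod_finite B n
  haveI : FiniteDimensional ℂ ((boxMod B n).prod (boxMod B n)) := by
    let ψ : ((boxMod B n).prod (boxMod B n)) →ₗ[ℂ] (↥(boxMod B n) × ↥(boxMod B n)) :=
      { toFun := fun x => (⟨x.1.1, x.2.1⟩, ⟨x.1.2, x.2.2⟩)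
        map_add' := fun x y => rfl
        map_smul' := fun c x => rfl }
    refine FiniteDimensional.of_injective ψ (fun x y h => ?_)
    apply Subtype.ext
    have h1 := congrArg (fun t : ↥(boxMod B n) × ↥(boxMod B n) => (t.1 : L)) h
    have h2 := congrArg (fun t : ↥(boxMod B n) × ↥(boxMod B n) => (t.2 : L)) h
    exact Prod.ext h1 h2
  apply Submodule.finiteDimensional_of_le (S₂ := (boxMod B n).prod (boxMod B n))
  intro x hx
  obtain ⟨h1, h2, h3, h4, h5, h6⟩ := (mem_gammaSub.1 hx)
  have hb2 : ∀ (s : ℤ) (r : ℕ), x.2.coeff (s, r) ≠ 0 → s ≤ (k : ℤ) * r + j := by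
    intro s r hne
    have hrn : r ≤ n := by
      by_contra hc
      exact hne (h4 s r (by omega))
    have h6' := h6 (s - j) r hrn
    rw [zp_mul_apply] at h6'
    have : x.2.coeff (s - ↑j - -↑j, r) ≠ 0 := by
      have : s - (j : ℤ) - -(j : ℤ) = s := by ring
      rw [this]; exact hne
    have := h6' this
    omega
  have hkr : ∀ r : ℕ, r ≤ n → (k : ℤ) * r ≤ (k : ℤ) * n := by
    intro r hr
    have : k * r ≤ k * n := Nat.mul_le_mul_left k hr
    exact_mod_cast this
  refine Submodule.mem_prod.2 ⟨?_, ?_⟩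
  · -- bound for x.1
    intro s r hne
    have h0s : 0 ≤ s := h1 s r hne
    have hrn : r ≤ n := by
      by_contra hc
      exact hne (h3 s r (by omega))
    refine ⟨h0s, ?_, hrn⟩
    have hco : (zp (j : ℤ) * x.1 + p * x.2).coeff (s + j, r) = x.1.coeff (s, r) + (p * x.2).coeff (s + j, r) := by
      rw [coeff_comb]
      congr 2
      ring_nf
    by_cases hc : (zp (j : ℤ) * x.1 + p * x.2).coeff (s + j, r) ≠ 0
    · have := h5 (s + j) r hrn hc
      have := hkr r hrn
      have hM0 : (0:ℤ) ≤ max M 0 := le_max_right _ _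
      omega
    · push_neg at hc
      rw [hco] at hc
      have hpb : (p * x.2).coeff (s + j, r) ≠ 0 := by
        intro h0
        rw [h0, add_zero] at hc
        exact hne hc
      obtain ⟨s₁, s₂, r₁, r₂, hp, hx2, hs, hr⟩ := mul_decomp p x.2 (s + j) r hpb
      have hs1 : s₁ ≤ M := hMp s₁ r₁ hp
      have hs2 : s₂ ≤ (k : ℤ) * r₂ + j := hb2 s₂ r₂ hx2
      have hr2 : (k : ℤ) * r₂ ≤ (k : ℤ) * n := hkr r₂ (by omega)
      have hMM : M ≤ max M 0 := le_max_left _ _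
      omega
  · -- bound for x.2
    intro s r hne
    have hrn : r ≤ n := by
      by_contra hc
      exact hne (h4 s r (by omega))
    refine ⟨h2 s r hne, ?_, hrn⟩
    have := hb2 s r hne
    have := hkr r hrn
    have hM0 : (0:ℤ) ≤ max M 0 := le_max_right _ _
    omega

/-! ### Truncation map between levels -/

def truncPair (N : ℕ) : L × L →ₗ[ℂ] L × L := (truncL N).prodMap (truncL N)

lemma truncPair_apply (N : ℕ) (x : L × L) :
    truncPair N x = (truncL N x.1, truncL N x.2) := rfl

/-- Truncating a level-`n` section gives a level-`N` section. -/
lemma trunc_mem (k j n N : ℕ) (p : L) (hNn : N ≤ n) (x : L × L)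
    (hx : x ∈ GammaSet k j n p) : truncPair N x ∈ GammaSet k j N p := by
  obtain ⟨h1, h2, h3, h4, h5, h6⟩ := hx
  rw [truncPair_apply]
  refine ⟨?_, ?_, ?_, ?_, ?_, ?_⟩
  · intro s r hne
    rw [truncL_apply] at hne
    split_ifs at hne with hr
    · exact h1 s r hne
    · exact absurd rfl hne
  · intro s r hne
    rw [truncL_apply] at hne
    split_ifs at hne with hr
    · exact h2 s r hne
    · exact absurd rfl hne
  · intro s r hr
    rw [truncL_apply, if_neg (by omega)]
  · intro s r hr
    rw [truncL_apply, if_neg (by omega)]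
  · intro s r hr hne
    have e1 : (truncL N x.1).coeff (s - j, r) = x.1.coeff (s - j, r) := by
      rw [truncL_apply, if_pos hr]
    have e2' : (p * truncL N x.2).coeff (s, r) = (p * x.2).coeff (s, r) := by
      have h0 : p * x.2 = p * truncL N x.2 + p * (x.2 - truncL N x.2) := by ring
      have hz : (p * (x.2 - truncL N x.2)).coeff (s, r) = 0 := by
        apply mul_rows_zero
        intro s' r' hr'
        rw [AddMonoidAlgebra.coeff_sub, Finsupp.sub_apply, truncL_apply, if_pos (le_trans hr' hr), sub_self]
      rw [h0, AddMonoidAlgebra.coeff_add, Finsupp.add_apply, hz, add_zero]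
    have key : (zp (j : ℤ) * truncL N x.1 + p * truncL N x.2).coeff (s, r)
        = (zp (j : ℤ) * x.1 + p * x.2).coeff (s, r) := by
      rw [coeff_comb, coeff_comb, e1, e2']
    exact h5 s r (le_trans hr hNn) (key ▸ hne)
  · intro s r hr hne
    rw [zp_mul_apply, truncL_apply, if_pos hr] at hne
    have := h6 s r (le_trans hr hNn)
    rw [zp_mul_apply] at this
    exact this hne

/-! ### The correction map `E` -/

/-- `Emap j n q b` is the truncation of `z⁻ʲ·(q·b)` to the region
`0 ≤ s`, `j+1 ≤ r ≤ n`. -/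
def Emap (j n : ℕ) (q : L) : L →ₗ[ℂ] L :=
  (filterLM fun t => 0 ≤ t.1 ∧ j + 1 ≤ t.2 ∧ t.2 ≤ n) ∘ₗ
    (LinearMap.mulLeft ℂ (zp (-(j : ℤ)))) ∘ₗ (LinearMap.mulLeft ℂ q)

lemma Emap_apply (j n : ℕ) (q b : L) (s : ℤ) (r : ℕ) :
    (Emap j n q b).coeff (s, r) = if 0 ≤ s ∧ j + 1 ≤ r ∧ r ≤ n then (q * b).coeff (s + j, r) else 0 := by
  rw [Emap]
  simp only [LinearMap.coe_comp, Function.comp_apply, LinearMap.mulLeft_apply]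
  rw [filterLM_apply, zp_mul_apply, sub_neg_eq_add]
  by_cases h : 0 ≤ s ∧ j + 1 ≤ r ∧ r ≤ n <;> simp [h]

lemma Emap_add_left (j n : ℕ) (q q' : L) (b : L) :
    Emap j n q b + Emap j n q' b = Emap j n (q + q') b := by
  simp only [Emap, LinearMap.coe_comp, Function.comp_apply, LinearMap.mulLeft_apply]
  rw [← map_add, ← mul_add, ← add_mul]

lemma Emap_zero_left (j n : ℕ) (b : L) : Emap j n 0 b = 0 := by
  simp only [Emap, LinearMap.coe_comp, Function.comp_apply, LinearMap.mulLeft_apply]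
  rw [zero_mul, mul_zero, map_zero]

/-! ### Surjectivity of truncation -/

lemma exists_preimage (k : ℕ) (hk : 1 ≤ k) (j n : ℕ) (p : L) (hn : j ≤ n) (y : L × L)
    (hy : y ∈ GammaSet k j j p) :
    ∃ x ∈ GammaSet k j n p, truncPair j x = y := by
  obtain ⟨h1, h2, h3, h4, h5, h6⟩ := hy
  refine ⟨(y.1 - Emap j n p y.2, y.2), ⟨?_, h2, ?_, ?_, ?_, ?_⟩, ?_⟩
  · -- MemPolyRing fst
    intro s r hne
    rw [AddMonoidAlgebra.coeff_sub, Finsupp.sub_apply] at hne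
    by_cases hy1 : y.1.coeff (s, r) ≠ 0
    · exact h1 s r hy1
    · push_neg at hy1
      rw [hy1, zero_sub, neg_ne_zero, Emap_apply] at hne
      split_ifs at hne with hc
      · exact hc.1
      · exact absurd rfl hne
  · -- rows > n fst
    intro s r hr
    rw [AddMonoidAlgebra.coeff_sub, Finsupp.sub_apply, h3 s r (by omega), Emap_apply, if_neg (by omega), sub_self]
  · -- rows > n snd
    intro s r hr
    exact h4 s r (by omega)
  · -- first V-hol condition
    intro s r hrn hne
    rw [coeff_comb, AddMonoidAlgebra.coeff_sub, Finsupp.sub_apply] at hne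
    by_cases hr : r ≤ j
    · rw [Emap_apply, if_neg (by omega), sub_zero] at hne
      exact h5 s r hr (by rw [coeff_comb]; exact hne)
    · push_neg at hr
      rw [h3 (s - j) r hr, zero_sub] at hne
      by_cases hs : (j : ℤ) ≤ s
      · rw [Emap_apply, if_pos ⟨by omega, by omega, hrn⟩] at hne
        have hss : s - (j : ℤ) + (j : ℤ) = s := by ring
        rw [hss, neg_add_cancel] at hne
        exact absurd rfl hne
      · push_neg at hs
        have hjr : ((j : ℤ) : ℤ) < (r : ℤ) := by exact_mod_cast hr
        have h1k : (1 : ℤ) ≤ (k : ℤ) := by exact_mod_cast hk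
        have hrkr : (r : ℤ) ≤ (k : ℤ) * r := by nlinarith [Int.ofNat_nonneg r]
        omega
  · -- second V-hol condition
    intro s r hrn hne
    rw [zp_mul_apply] at hne
    by_cases hr : r ≤ j
    · have := h6 s r hr
      rw [zp_mul_apply] at this
      exact this hne
    · exact absurd (h4 _ r (by omega)) hne
  · -- truncation is y
    rw [truncPair_apply]
    have t2 : truncL j y.2 = y.2 := truncL_eq_self j y.2 h4
    have tE : truncL j (Emap j n p y.2) = 0 := by
      rw [truncL_eq_zero_iff]
      intro s r hr
      rw [Emap_apply, if_neg (by omega)]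
    have t1 : truncL j (y.1 - Emap j n p y.2) = y.1 := by
      rw [map_sub, tE, sub_zero, truncL_eq_self j y.1 h3]
    rw [t1, t2]

/-! ### The kernel of truncation and its `p`-independence -/

def Kmod (k j n : ℕ) (p : L) : Submodule ℂ (L × L) :=
  GammaSub k j n p ⊓ LinearMap.ker (truncPair j)

lemma mem_Kmod {k j n : ℕ} {p : L} {x : L × L} :
    x ∈ Kmod k j n p ↔ x ∈ GammaSet k j n p ∧
      (∀ (s : ℤ) (r : ℕ), r ≤ j → x.1.coeff (s, r) = 0) ∧
      (∀ (s : ℤ) (r : ℕ), r ≤ j → x.2.coeff (s, r) = 0) := by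
  rw [Kmod, Submodule.mem_inf, LinearMap.mem_ker, truncPair_apply, Prod.mk_eq_zero,
    truncL_eq_zero_iff, truncL_eq_zero_iff, mem_gammaSub]

def Fmap (j n : ℕ) (q : L) : L × L →ₗ[ℂ] L × L :=
  LinearMap.prod (LinearMap.fst ℂ L L + (Emap j n q) ∘ₗ LinearMap.snd ℂ L L)
    (LinearMap.snd ℂ L L)

lemma Fmap_apply (j n : ℕ) (q : L) (x : L × L) :
    Fmap j n q x = (x.1 + Emap j n q x.2, x.2) := rfl

lemma Fmap_comp (j n : ℕ) (q q' : L) (hq : q + q' = 0) :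
    (Fmap j n q).comp (Fmap j n q') = LinearMap.id := by
  apply LinearMap.ext
  intro x
  simp only [LinearMap.comp_apply, Fmap_apply, LinearMap.id_apply]
  have : x.1 + Emap j n q' x.2 + Emap j n q x.2 = x.1 := by
    rw [add_assoc, Emap_add_left, show q' + q = 0 by rw [add_comm]; exact hq,
      Emap_zero_left, add_zero]
  rw [this]

/-- The key exchange: the correction map sends `Kmod(pa)` into `Kmod(pb)`. -/
lemma kmod_maps (k : ℕ) (hk : 1 ≤ k) (j n : ℕ) (pa pb : L) (x : L × L)
    (hx : x ∈ Kmod k j n pa) : Fmap j n (pa - pb) x ∈ Kmod k j n pb := by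
  rw [mem_Kmod] at hx ⊢
  obtain ⟨⟨h1, h2, h3, h4, h5, h6⟩, hz1, hz2⟩ := hx
  rw [Fmap_apply]
  refine ⟨⟨?_, h2, ?_, h4, ?_, h6⟩, ?_, hz2⟩
  · -- MemPolyRing fst
    intro s r hne
    rw [AddMonoidAlgebra.coeff_add, Finsupp.add_apply] at hne
    rcases add_ne_aux hne with h' | h'
    · exact h1 s r h'
    · rw [Emap_apply] at h'
      split_ifs at h' with hc
      · exact hc.1
      · exact absurd rfl h'
  · -- rows > n fst
    intro s r hr
    rw [AddMonoidAlgebra.coeff_add, Finsupp.add_apply, h3 s r hr, Emap_apply, if_neg (by omega), add_zero]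
  · -- first V-hol condition
    intro s r hrn hne
    rw [coeff_comb, AddMonoidAlgebra.coeff_add, Finsupp.add_apply] at hne
    by_cases hr : r ≤ j
    · exfalso
      apply hne
      rw [hz1 (s - j) r hr, Emap_apply, if_neg (by omega),
        mul_rows_zero pb x.2 s r (fun s' r' hr' => hz2 s' r' (le_trans hr' hr))]
      ring
    · push_neg at hr
      by_cases hs : (j : ℤ) ≤ s
      · rw [Emap_apply, if_pos ⟨by omega, by omega, hrn⟩] at hne
        have hss : s - (j : ℤ) + (j : ℤ) = s := by ring
        rw [hss, sub_mul, AddMonoidAlgebra.coeff_sub, Finsupp.sub_apply] at hne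
        apply h5 s r hrn
        rw [coeff_comb]
        intro h0
        apply hne
        rw [← h0]
        ring
      · push_neg at hs
        have hjr : ((j : ℤ) : ℤ) < (r : ℤ) := by exact_mod_cast hr
        have h1k : (1 : ℤ) ≤ (k : ℤ) := by exact_mod_cast hk
        have hrkr : (r : ℤ) ≤ (k : ℤ) * r := by nlinarith [Int.ofNat_nonneg r]
        omega
  · -- rows ≤ j of fst vanish
    intro s r hr
    rw [AddMonoidAlgebra.coeff_add, Finsupp.add_apply, hz1 s r hr, Emap_apply, if_neg (by omega), add_zero]

lemma kmod_finrank_eq (k : ℕ) (hk : 1 ≤ k) (j n : ℕ) (pa pb : L) :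
    finrank ℂ (Kmod k j n pa) = finrank ℂ (Kmod k j n pb) := by
  set e : (L × L) ≃ₗ[ℂ] (L × L) :=
    LinearEquiv.ofLinear (Fmap j n (pa - pb)) (Fmap j n (pb - pa))
      (Fmap_comp j n (pa - pb) (pb - pa) (by ring))
      (Fmap_comp j n (pb - pa) (pa - pb) (by ring)) with he
  have hmapeq : (Kmod k j n pa).map (e : (L × L) →ₗ[ℂ] (L × L)) = Kmod k j n pb := by
    apply le_antisymm
    · rintro _ ⟨x, hx, rfl⟩
      exact kmod_maps k hk j n pa pb x hx
    · intro x hx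
      refine ⟨Fmap j n (pb - pa) x, kmod_maps k hk j n pb pa x hx, ?_⟩
      have := DFunLike.congr_fun (Fmap_comp j n (pa - pb) (pb - pa) (by ring)) x
      simpa [he] using this
  calc finrank ℂ (Kmod k j n pa)
      = finrank ℂ ((Kmod k j n pa).map (e : (L × L) →ₗ[ℂ] (L × L))) :=
        LinearEquiv.finrank_eq (e.submoduleMap (Kmod k j n pa))
    _ = finrank ℂ (Kmod k j n pb) := by rw [hmapeq]

/-! ### Rank–nullity splitting -/

set_option synthInstance.maxHeartbeats 1000000 in
set_option maxHeartbeats 1000000 in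
lemma finrank_split (k : ℕ) (hk : 1 ≤ k) (j n : ℕ) (p : L) (hn : j ≤ n) :
    finrank ℂ (GammaSub k j n p)
      = finrank ℂ (GammaSub k j j p) + finrank ℂ (Kmod k j n p) := by
  haveI := gammaSub_finite k j n p
  have hmap : ∀ x ∈ GammaSub k j n p, truncPair j x ∈ GammaSub k j j p :=
    fun x hx => trunc_mem k j n j p hn x hx
  set φ := (truncPair j).restrict hmap with hφ
  have hsur : LinearMap.range φ = ⊤ := by
    rw [LinearMap.range_eq_top]
    rintro ⟨y, hy⟩
    obtain ⟨x, hx, hxy⟩ := exists_preimage k hk j n p hn y hy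
    exact ⟨⟨x, hx⟩, Subtype.ext hxy⟩
  have hker : LinearMap.ker φ = (Kmod k j n p).comap (GammaSub k j n p).subtype := by
    ext x
    rw [LinearMap.mem_ker, Submodule.mem_comap, Submodule.subtype_apply, Kmod,
      Submodule.mem_inf, LinearMap.mem_ker]
    constructor
    · intro h
      exact ⟨x.2, by simpa [hφ, Subtype.ext_iff, LinearMap.restrict_apply] using h⟩
    · intro h
      simp only [hφ]
      apply Subtype.ext
      simpa [LinearMap.restrict_apply] using h.2
  have hrnk := LinearMap.finrank_range_add_finrank_ker φ
  rw [hsur, hker] at hrnk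
  have htop : finrank ℂ (⊤ : Submodule ℂ (GammaSub k j j p)) = finrank ℂ (GammaSub k j j p) :=
    finrank_top ℂ _
  have hcmp : finrank ℂ ((Kmod k j n p).comap (GammaSub k j n p).subtype)
      = finrank ℂ (Kmod k j n p) :=
    LinearEquiv.finrank_eq (Submodule.comapSubtypeEquivOfLe
      (inf_le_left : Kmod k j n p ≤ GammaSub k j n p))
  omega

/-- For `p₁, p₂ ∈ L` divisible by `u`, the difference
`Δ_n(p₁,p₂) = dim_ℂ Γ_n(p₁) − dim_ℂ Γ_n(p₂)` is eventually constant in `n`. -/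
theorem delta_eventually_constant (k : ℕ) (hk : 1 ≤ k) (j : ℕ) (p₁ p₂ : L)
    (hu₁ : ∀ (s : ℤ) (r : ℕ), p₁.coeff (s, r) ≠ 0 → 1 ≤ r)
    (hu₂ : ∀ (s : ℤ) (r : ℕ), p₂.coeff (s, r) ≠ 0 → 1 ≤ r) :
    ∃ N : ℕ, ∀ n, N ≤ n →
      (Module.finrank ℂ (Gamma k j n p₁) : ℤ) - Module.finrank ℂ (Gamma k j n p₂)
        = (Module.finrank ℂ (Gamma k j N p₁) : ℤ) - Module.finrank ℂ (Gamma k j N p₂) := by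
  refine ⟨j, fun n hn => ?_⟩
  have g1 := finrank_split k hk j n p₁ hn
  have g2 := finrank_split k hk j n p₂ hn
  have g3 := kmod_finrank_eq k hk j n p₁ p₂
  rw [Gamma_eq k j n p₁, Gamma_eq k j n p₂, Gamma_eq k j j p₁, Gamma_eq k j j p₂,
    g1, g2, g3]
  push_cast
  ring
end
end

section
/- Let p ∈ L and n ≥ 0, where here ℂ[[z]][u]/(u^{n+1}) denotes truncated series whose coefficients in u are formal power series in z. If (a, b) with a, b ∈ ℂ[[z]][u]/(u^{n+1}) satisfies that zʲ·a + p·b and z⁻ʲ·b (formal Laurent-in-z series) have every occurring monomial zˢuʳ with s ≤ k·r, then a and b are polynomials in z (each u-degree part of a and b has only finitely many nonzero z-coefficients). Consequently the space of such pairs (a,b), which is H⁰(ℓ^(n); E^(n)) in the Čech description, is a finite-dimensional ℂ-vector space. -/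
noncomputable section

/-- Formal series in the monomials `zˢuʳ` (`s ∈ ℤ`, `r ∈ ℕ`), as coefficient functions. -/
abbrev FS : Type := ℤ × ℕ → ℂ

/-- The product of a Laurent polynomial `p ∈ L` with a formal series: for each monomial only
finitely many terms of `p` contribute, so the product is a well-defined formal series. -/
def mulL (p : L) (f : FS) : FS := fun m =>
  ∑ e ∈ Finsupp.support p.coeff, if e.2 ≤ m.2 then p.coeff e * f (m.1 - e.1, m.2 - e.2) else 0

/-- Multiplication of a formal series by `zᵗ` (`t ∈ ℤ`). -/
def shiftz (t : ℤ) (f : FS) : FS := fun m => f (m.1 - t, m.2)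

/-- A formal series is V-holomorphic if every occurring monomial `zˢuʳ` satisfies `s ≤ k·r`. -/
def VHolF (k : ℕ) (f : FS) : Prop := ∀ (s : ℤ) (r : ℕ), f (s, r) ≠ 0 → s ≤ (k : ℤ) * r

/-- A formal series lies in `ℂ[[z,u]]`: no negative powers of `z` occur. -/
def MemPS (f : FS) : Prop := ∀ (s : ℤ) (r : ℕ), s < 0 → f (s, r) = 0

/-- Truncation at u-degree `n`: representatives of `ℂ[[z]][u]/(u^{n+1})`. -/
def TruncAt (n : ℕ) (f : FS) : Prop := ∀ (s : ℤ) (r : ℕ), n < r → f (s, r) = 0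

lemma bBound (k j n : ℕ) (b : FS) (hb : MemPS b) (htb : TruncAt n b)
    (hv : VHolF k (shiftz (-(j:ℤ)) b)) :
    ∀ s r, b (s, r) ≠ 0 → 0 ≤ s ∧ s ≤ (k:ℤ)*n + j ∧ r ≤ n := by
  intro s r hne
  have hr : r ≤ n := by by_contra h; exact hne (htb s r (not_le.1 h))
  have h0 : 0 ≤ s := by by_contra h; exact hne (hb s r (not_le.1 h))
  have hsh : shiftz (-(j:ℤ)) b (s - j, r) ≠ 0 := by
    simpa [shiftz, sub_neg_eq_add, sub_add_cancel] using hne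
  have := hv (s - j) r hsh
  have hkr : (k:ℤ) * r ≤ (k:ℤ) * n := by
    exact mul_le_mul_of_nonneg_left (by exact_mod_cast hr) (by positivity)
  refine ⟨h0, by omega, hr⟩

lemma aBound (k j n : ℕ) (p : L) (a b : FS) (ha : MemPS a) (hb : MemPS b)
    (hta : TruncAt n a) (htb : TruncAt n b)
    (hva : VHolF k (shiftz (j:ℤ) a + mulL p b))
    (hvb : VHolF k (shiftz (-(j:ℤ)) b)) :
    ∀ s r, a (s, r) ≠ 0 →
      0 ≤ s ∧ s ≤ (k:ℤ)*n + j + (p.coeff.support.sup fun e => e.1.toNat) ∧ r ≤ n := by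
  intro s r hne
  have hr : r ≤ n := by by_contra h; exact hne (hta s r (not_le.1 h))
  have h0 : 0 ≤ s := by by_contra h; exact hne (ha s r (not_le.1 h))
  have hkr : (k:ℤ) * r ≤ (k:ℤ) * n :=
    mul_le_mul_of_nonneg_left (by exact_mod_cast hr) (by positivity)
  refine ⟨h0, ?_, hr⟩
  have heval : (shiftz (j:ℤ) a + mulL p b) (s + j, r) = a (s, r) + mulL p b (s + j, r) := by
    simp [shiftz, Pi.add_apply]
  by_cases hsum : mulL p b (s + j, r) = 0
  · have hne' : (shiftz (j:ℤ) a + mulL p b) (s + j, r) ≠ 0 := by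
      rw [heval, hsum, add_zero]; exact hne
    have := hva (s + j) r hne'
    have hM : (0:ℤ) ≤ (p.coeff.support.sup fun e => e.1.toNat) := by positivity
    omega
  · obtain ⟨e, he, hterm⟩ := Finset.exists_ne_zero_of_sum_ne_zero (by unfold mulL at hsum; exact hsum)
    have he2 : e.2 ≤ r := by by_contra h; simp [h] at hterm
    rw [if_pos he2] at hterm
    have hbne : b (s + j - e.1, r - e.2) ≠ 0 := fun h => hterm (by simp [h])
    obtain ⟨_, hub, _⟩ := bBound k j n b hb htb hvb _ _ hbne
    have h1 : e.1 ≤ ((p.coeff.support.sup fun e => e.1.toNat : ℕ) : ℤ) := by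
      calc e.1 ≤ (e.1.toNat : ℤ) := Int.self_le_toNat e.1
        _ ≤ _ := by exact_mod_cast Finset.le_sup (f := fun e => e.1.toNat) he
    omega

/-- Pairs of series supported (in both components) in the finite box `F`. -/
def boxSubmodule (F : Set (ℤ × ℕ)) : Submodule ℂ (FS × FS) where
  carrier := {x | ∀ m, m ∉ F → x.1 m = 0 ∧ x.2 m = 0}
  zero_mem' := by intro m _; simp
  add_mem' := by
    intro x y hx hy m hm
    obtain ⟨h1, h2⟩ := hx m hm; obtain ⟨h3, h4⟩ := hy m hm
    constructor <;> simp [Prod.fst_add, Prod.snd_add, Pi.add_apply, h1, h2, h3, h4]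
  smul_mem' := by
    intro c x hx m hm
    obtain ⟨h1, h2⟩ := hx m hm
    constructor <;> simp [Prod.smul_fst, Prod.smul_snd, Pi.smul_apply, h1, h2]

def restrMap (F : Finset (ℤ × ℕ)) : (FS × FS) →ₗ[ℂ] ((F → ℂ) × (F → ℂ)) where
  toFun x := (fun m => x.1 m, fun m => x.2 m)
  map_add' := by intros; rfl
  map_smul' := by intros; rfl

lemma boxFin (F : Finset (ℤ × ℕ)) : FiniteDimensional ℂ (boxSubmodule (F : Set (ℤ × ℕ))) := by
  apply FiniteDimensional.of_injective
    ((restrMap F).comp (boxSubmodule (F : Set (ℤ × ℕ))).subtype)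
  rw [← LinearMap.ker_eq_bot, LinearMap.ker_eq_bot']
  intro x hx
  apply Subtype.ext
  have hfst := congrArg Prod.fst hx
  have hsnd := congrArg Prod.snd hx
  have key : ∀ m : ℤ × ℕ, (x : FS × FS).1 m = 0 ∧ (x : FS × FS).2 m = 0 := by
    intro m
    by_cases hm : m ∈ F
    · exact ⟨congrFun hfst ⟨m, hm⟩, congrFun hsnd ⟨m, hm⟩⟩
    · exact x.2 m hm
  ext m
  · exact (key m).1
  · exact (key m).2

/-- Let `p ∈ L` and `n ≥ 0`. If `a, b ∈ ℂ[[z]][u]/(u^{n+1})` are such that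
`zʲ·a + p·b` and `z⁻ʲ·b` are V-holomorphic, then `a` and `b` are polynomials in `z` (each
u-degree part has finitely many nonzero z-coefficients); consequently the space
`H⁰(ℓ⁽ⁿ⁾; E⁽ⁿ⁾)` of all such pairs is a finite-dimensional ℂ-vector space. -/
theorem sections_are_algebraic_and_finite_dimensional (k : ℕ) (hk : 1 ≤ k) (j : ℕ)
    (p : L) (n : ℕ) :
    (∀ a b : FS, MemPS a → MemPS b → TruncAt n a → TruncAt n b →
      VHolF k (shiftz (j : ℤ) a + mulL p b) → VHolF k (shiftz (-(j : ℤ)) b) →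
      (∀ r : ℕ, {s : ℤ | a (s, r) ≠ 0}.Finite) ∧
      (∀ r : ℕ, {s : ℤ | b (s, r) ≠ 0}.Finite)) ∧
    FiniteDimensional ℂ (Submodule.span ℂ
      {x : FS × FS | MemPS x.1 ∧ MemPS x.2 ∧ TruncAt n x.1 ∧ TruncAt n x.2 ∧
        VHolF k (shiftz (j : ℤ) x.1 + mulL p x.2) ∧ VHolF k (shiftz (-(j : ℤ)) x.2)}) := by
  classical
  set B : ℤ := (k:ℤ)*n + j + (p.coeff.support.sup fun e => e.1.toNat) with hB
  constructor
  · intro a b ha hb hta htb hva hvb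
    constructor
    · intro r
      apply Set.Finite.subset (Set.finite_Icc (0:ℤ) B)
      intro s hs
      obtain ⟨h1, h2, _⟩ := aBound k j n p a b ha hb hta htb hva hvb s r hs
      exact Set.mem_Icc.2 ⟨h1, h2⟩
    · intro r
      apply Set.Finite.subset (Set.finite_Icc (0:ℤ) B)
      intro s hs
      obtain ⟨h1, h2, _⟩ := bBound k j n b hb htb hvb s r hs
      refine Set.mem_Icc.2 ⟨h1, le_trans h2 ?_⟩
      have : (0:ℤ) ≤ (p.coeff.support.sup fun e => e.1.toNat) := by positivity
      omega
  · set F : Finset (ℤ × ℕ) := Finset.Icc (0:ℤ) B ×ˢ Finset.range (n+1) with hF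
    haveI := boxFin F
    apply Submodule.finiteDimensional_of_le (S₂ := boxSubmodule (F : Set (ℤ × ℕ)))
    rw [Submodule.span_le]
    rintro x ⟨ha, hb, hta, htb, hva, hvb⟩
    intro m hm
    have hM : (0:ℤ) ≤ (p.coeff.support.sup fun e => e.1.toNat) := by positivity
    have hmF : m.1 ∉ Finset.Icc (0:ℤ) B ∨ m.2 ∉ Finset.range (n+1) := by
      by_contra h
      push_neg at h
      exact hm (by simpa [hF, Finset.mem_product] using (Finset.mk_mem_product h.1 h.2 :
        (m.1, m.2) ∈ Finset.Icc (0:ℤ) B ×ˢ Finset.range (n+1)))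
    constructor
    · by_contra hne
      obtain ⟨h1, h2, h3⟩ := aBound k j n p x.1 x.2 ha hb hta htb hva hvb m.1 m.2 hne
      rcases hmF with h | h
      · exact h (Finset.mem_Icc.2 ⟨h1, h2⟩)
      · exact h (Finset.mem_range.2 (by omega))
    · by_contra hne
      obtain ⟨h1, h2, h3⟩ := bBound k j n x.2 hb htb hvb m.1 m.2 hne
      rcases hmF with h | h
      · exact h (Finset.mem_Icc.2 ⟨h1, by omega⟩)
      · exact h (Finset.mem_range.2 (by omega))
end
end

section
/- Let j ≥ 0 and let L₃ = ℂ[z, z⁻¹][u₁, u₂] be the ring of Laurent polynomials in z with polynomial coefficients in u₁, u₂; call f ∈ L₃ V-holomorphic if every monomial zˢu₁ʳu₂ᵗ occurring in f satisfies s ≤ r + t (holomorphy in the coordinates (z⁻¹, zu₁, zu₂) of the second chart of W₁ = Tot(O_{ℙ¹}(−1) ⊕ O_{ℙ¹}(−1))). Suppose p ∈ L₃ has every monomial with u₁-degree plus u₂-degree at least 1, and let p̂ be obtained from p by deleting every monomial zˢu₁ʳu₂ᵗ that does not satisfy both 1 ≤ r + t ≤ 2j − 2 and r + t − j + 1 ≤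 s ≤ j − 1. Then there exist a ∈ ℂ[z, u₁, u₂] and a V-holomorphic b ∈ L₃ with p − p̂ = zʲ·a + z⁻ʲ·b; i.e. every extension class of O(j) by O(−j) on W₁ has a canonical polynomial normal form supported on these monomials. -/
noncomputable section

/-- `L₃ = ℂ[z,z⁻¹][u₁,u₂]`: Laurent polynomials in `z` with polynomial coefficients in
`u₁, u₂`, realised as the algebra of finitely supported ℂ-linear combinations of monomials
on the exponent monoid `ℤ × (ℕ × ℕ)`, where `(s, (r, t))` is the exponent of `zˢu₁ʳu₂ᵗ`. -/
abbrev L3 : Type := AddMonoidAlgebra ℂ (ℤ × (ℕ × ℕ))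

/-- The monomial `zˢ` (`s ∈ ℤ`). -/
def zp3 (s : ℤ) : L3 := AddMonoidAlgebra.single (s, (0, 0)) 1

/-- `f` is V-holomorphic on `W₁ = Tot(O(−1) ⊕ O(−1))`: every monomial `zˢu₁ʳu₂ᵗ` occurring in
`f` satisfies `s ≤ r + t`, i.e. `f` is holomorphic in the coordinates `(z⁻¹, zu₁, zu₂)`. -/
def VHol3 (f : L3) : Prop :=
  ∀ (s : ℤ) (r t : ℕ), f.coeff (s, (r, t)) ≠ 0 → s ≤ (r : ℤ) + t

/-- `f` lies in `ℂ[z,u₁,u₂] ⊆ L₃`, i.e. is holomorphic on the chart `U`. -/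
def MemPolyRing3 (f : L3) : Prop := ∀ (s : ℤ) (r t : ℕ), f.coeff (s, (r, t)) ≠ 0 → 0 ≤ s

/-- Shifted truncation helper: `(shiftCut c d q) m = if c ≤ m.1 + d then q (m.1 + d, m.2) else 0`. -/
lemma exists_shiftCut (c d : ℤ) (q : L3) :
    ∃ f : L3, ∀ m : ℤ × (ℕ × ℕ),
      f.coeff m = if c ≤ m.1 + d then q.coeff (m.1 + d, m.2) else 0 := by
  refine ⟨AddMonoidAlgebra.ofCoeff (Finsupp.onFinset (q.coeff.support.image fun m => (m.1 - d, m.2))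
    (fun m : ℤ × (ℕ × ℕ) => if c ≤ m.1 + d then q.coeff (m.1 + d, m.2) else 0) ?_), fun m => rfl⟩
  intro m hm
  have hq : q.coeff (m.1 + d, m.2) ≠ 0 := by
    intro h0; apply hm; simp [h0]
  simp only [Finset.mem_image]
  exact ⟨(m.1 + d, m.2), Finsupp.mem_support_iff.mpr hq, by simp⟩

lemma exists_shiftCutLt (c d : ℤ) (q : L3) :
    ∃ f : L3, ∀ m : ℤ × (ℕ × ℕ),
      f.coeff m = if m.1 + d < c then q.coeff (m.1 + d, m.2) else 0 := by
  refine ⟨AddMonoidAlgebra.ofCoeff (Finsupp.onFinset (q.coeff.support.image fun m => (m.1 - d, m.2))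
    (fun m : ℤ × (ℕ × ℕ) => if m.1 + d < c then q.coeff (m.1 + d, m.2) else 0) ?_), fun m => rfl⟩
  intro m hm
  have hq : q.coeff (m.1 + d, m.2) ≠ 0 := by
    intro h0; apply hm; simp [h0]
  simp only [Finset.mem_image]
  exact ⟨(m.1 + d, m.2), Finsupp.mem_support_iff.mpr hq, by simp⟩

/-- On `W₁ = Tot(O_{ℙ¹}(−1) ⊕ O_{ℙ¹}(−1))`, let `p ∈ L₃` have every monomial
of total `u`-degree at least `1`, and let `p̂` be obtained from `p` by deleting every monomial
`zˢu₁ʳu₂ᵗ` not satisfying `1 ≤ r + t ≤ 2j − 2` and `r + t − j + 1 ≤ s ≤ j − 1`.  Then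
`p − p̂ = zʲ·a + z⁻ʲ·b` with `a ∈ ℂ[z,u₁,u₂]` and `b` V-holomorphic: every extension class of
`O(j)` by `O(−j)` on `W₁` has a canonical polynomial normal form supported on these monomials. -/
theorem canonical_normal_form_W1 (j : ℕ) (p phat : L3)
    (hu : ∀ (s : ℤ) (r t : ℕ), p.coeff (s, (r, t)) ≠ 0 → 1 ≤ r + t)
    (hphat : ∀ (s : ℤ) (r t : ℕ),
      phat.coeff (s, (r, t)) =
        if 1 ≤ r + t ∧ (r : ℤ) + t ≤ 2 * (j : ℤ) - 2 ∧
            (r : ℤ) + t - j + 1 ≤ s ∧ s ≤ (j : ℤ) - 1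
        then p.coeff (s, (r, t)) else 0) :
    ∃ a b : L3, MemPolyRing3 a ∧ VHol3 b ∧ p - phat = zp3 j * a + zp3 (-(j : ℤ)) * b := by
  set q : L3 := p - phat with hq
  have hqkey : ∀ (s : ℤ) (r t : ℕ), q.coeff (s, (r, t)) ≠ 0 →
      1 ≤ r + t ∧ ¬((r : ℤ) + t ≤ 2 * (j : ℤ) - 2 ∧
        (r : ℤ) + t - j + 1 ≤ s ∧ s ≤ (j : ℤ) - 1) := by
    intro s r t hne
    have hqapp : q.coeff (s, (r, t)) = p.coeff (s, (r, t)) - phat.coeff (s, (r, t)) := by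
      exact Finsupp.sub_apply p.coeff phat.coeff _
    have hp : p.coeff (s, (r, t)) ≠ 0 := by
      intro h0
      apply hne
      rw [hqapp, h0, hphat]
      simp [h0]
    refine ⟨hu s r t hp, ?_⟩
    intro hcond
    apply hne
    rw [hqapp, hphat, if_pos ⟨hu s r t hp, hcond⟩]
    ring
  obtain ⟨a, ha⟩ := exists_shiftCut j j q
  obtain ⟨b, hb⟩ := exists_shiftCutLt j (-(j : ℤ)) q
  refine ⟨a, b, ?_, ?_, ?_⟩
  · intro s r t hne
    rw [ha (s, (r, t))] at hne
    by_cases h : (j : ℤ) ≤ s + j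
    · simpa using h
    · simp [h] at hne
  · intro s r t hne
    rw [hb (s, (r, t))] at hne
    by_cases h : s + -(j : ℤ) < j
    · rw [if_pos h] at hne
      obtain ⟨h1, h2⟩ := hqkey _ r t hne
      push_neg at h2
      omega
    · simp [h] at hne
  · ext m
    obtain ⟨s, r, t⟩ := m
    rw [AddMonoidAlgebra.coeff_add, Finsupp.add_apply]
    have hA : (zp3 j * a).coeff (s, (r, t)) = a.coeff (s - j, (r, t)) := by
      rw [zp3, AddMonoidAlgebra.coeff_single_mul_eq_mul_coeff ((s - j, (r, t)))
        (fun x _ => by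
          constructor
          · intro hxe
            have h1 := congrArg Prod.fst hxe
            have h2 := congrArg Prod.snd hxe
            simp only [Prod.fst_add, Prod.snd_add] at h1 h2
            refine Prod.ext (by simp; omega) ?_
            simpa [Prod.mk_zero_zero] using h2
          · rintro rfl; exact Prod.ext (by simp) (by simp))]
      rw [one_mul]
    have hB : (zp3 (-(j : ℤ)) * b).coeff (s, (r, t)) = b.coeff (s + j, (r, t)) := by
      rw [zp3, AddMonoidAlgebra.coeff_single_mul_eq_mul_coeff ((s + j, (r, t)))
        (fun x _ => by
          constructor
          · intro hxe
            have h1 := congrArg Prod.fst hxe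
            have h2 := congrArg Prod.snd hxe
            simp only [Prod.fst_add, Prod.snd_add] at h1 h2
            refine Prod.ext (by simp; omega) ?_
            simpa [Prod.mk_zero_zero] using h2
          · rintro rfl; exact Prod.ext (by simp) (by simp))]
      rw [one_mul]
    rw [hA, hB, ha (s - ↑j, (r, t)), hb (s + ↑j, (r, t))]
    simp only [sub_add_cancel, add_neg_cancel_right]
    by_cases h : (j : ℤ) ≤ s
    · rw [if_pos h, if_neg (by omega)]
      ring
    · rw [if_neg h, if_pos (by omega)]
      ring
end
end

section
/- Let S = ℂ[x,y,w]/(x·w − y²), and let M be the S-module with generators β₀, β₁, β₂, γ and relations y·β₀ − x·β₁, w·β₀ − y·β₁, y·β₁ − x·β₂, w·β₁ − y·β₂ (i.e. M is the cokernel of the map S⁴ → S⁴ whose matrix has columns (y, −x, 0, 0), (w, −y, 0, 0), (0, y, −x, 0), (0, w, −y, 0)). Then the dual module M^∨ = Hom_S(M, S) is a free S-module of rank 2, generated by the functionals β^∨: β₀ ↦ x, β₁ ↦ y, β₂ ↦ w, γ ↦ 0 and γ^∨: βᵢ ↦ 0, γ ↦ 1. -/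
noncomputable section
set_option synthInstance.maxHeartbeats 1000000
set_option maxHeartbeats 1000000
open MvPolynomial

/-- `S = ℂ[x,y,w]/(x·w − y²)`, the coordinate ring of the quadric cone `X₂`
(here `x = X 0`, `y = X 1`, `w = X 2`). -/
abbrev S : Type :=
  MvPolynomial (Fin 3) ℂ ⧸
    Ideal.span {(X 0 * X 2 - X 1 ^ 2 : MvPolynomial (Fin 3) ℂ)}

def xx : S := Ideal.Quotient.mk _ (X 0)
def yy : S := Ideal.Quotient.mk _ (X 1)
def ww : S := Ideal.Quotient.mk _ (X 2)

/-- The presentation matrix of `M`: its columns are the relation vectors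
`(y, −x, 0, 0)`, `(w, −y, 0, 0)`, `(0, y, −x, 0)`, `(0, w, −y, 0)`. -/
def relMatrix : Matrix (Fin 4) (Fin 4) S :=
  !![yy, ww, 0, 0; -xx, -yy, yy, ww; 0, 0, -xx, -yy; 0, 0, 0, 0]

/-- The map `S⁴ → S⁴` given by the presentation matrix. -/
def relMap : (Fin 4 → S) →ₗ[S] (Fin 4 → S) := Matrix.toLin' relMatrix

/-- `M`: the `S`-module with generators `β₀, β₁, β₂, γ` and relations
`y·β₀ − x·β₁`, `w·β₀ − y·β₁`, `y·β₁ − x·β₂`, `w·β₁ − y·β₂`,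
i.e. the cokernel of `relMap`. -/
abbrev M : Type := (Fin 4 → S) ⧸ LinearMap.range relMap

/-- The generators `β₀, β₁, β₂, γ` of `M` (as `gen 0, …, gen 3`). -/
def gen : Fin 4 → M := fun i => Submodule.Quotient.mk (Pi.single i (1 : S))

/-! ### Auxiliary theory: normal forms in `S` -/

abbrev Rxw : Type := MvPolynomial (Fin 2) ℂ
abbrev Pxw : Type := Polynomial Rxw

/-- View `ℂ[x,y,w]` as polynomials in `y` with coefficients in `ℂ[x,w]`. -/
def e3 : MvPolynomial (Fin 3) ℂ ≃ₐ[ℂ] Pxw :=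
  (renameEquiv ℂ (Equiv.swap 0 1)).trans (MvPolynomial.finSuccEquiv ℂ 2)

lemma e3_X0 : e3 (X 0) = Polynomial.C (X 0) := by
  simp only [e3, AlgEquiv.trans_apply, renameEquiv_apply, rename_X]
  rw [show ((Equiv.swap (0:Fin 3) 1) 0) = (0:Fin 2).succ from by decide]
  exact finSuccEquiv_X_succ

lemma e3_X1 : e3 (X 1) = Polynomial.X := by
  simp only [e3, AlgEquiv.trans_apply, renameEquiv_apply, rename_X]
  rw [show ((Equiv.swap (0:Fin 3) 1) 1) = 0 from by decide]
  exact finSuccEquiv_X_zero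

lemma e3_X2 : e3 (X 2) = Polynomial.C (X 1) := by
  simp only [e3, AlgEquiv.trans_apply, renameEquiv_apply, rename_X]
  rw [show ((Equiv.swap (0:Fin 3) 1) 2) = (1:Fin 2).succ from by decide]
  exact finSuccEquiv_X_succ

def gpol : Pxw := Polynomial.X ^ 2 - Polynomial.C (X 0 * X 1)

lemma e3_gen : e3 ((X 1)^2 - X 0 * X 2) = gpol := by
  rw [map_sub, map_pow, map_mul, e3_X0, e3_X1, e3_X2, gpol, map_mul]

lemma gpol_degree : gpol.degree = 2 :=
  Polynomial.degree_X_pow_sub_C (by norm_num) _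

lemma gpol_monic : gpol.Monic := by
  have : gpol = Polynomial.X ^ 2 + Polynomial.C (-(X 0 * X 1)) := by
    simp [gpol, sub_eq_add_neg]
  rw [this]
  exact Polynomial.monic_X_pow_add_C _ (by norm_num)

/-- The normal form `a(x,w) + y·b(x,w)` as an element of `S`. -/
def nf (a b : Rxw) : S :=
  Ideal.Quotient.mk _ (e3.symm (Polynomial.C a + Polynomial.C b * Polynomial.X))

lemma e3_symm_gen : e3.symm gpol = (X 1)^2 - X 0 * X 2 := by
  rw [← e3_gen, AlgEquiv.symm_apply_apply]

lemma mk_e3_g_mul (q : Pxw) :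
    Ideal.Quotient.mk _ (e3.symm (gpol * q)) = (0 : S) := by
  rw [Ideal.Quotient.eq_zero_iff_mem]
  have h : e3.symm (gpol * q) = (-(e3.symm q)) * (X 0 * X 2 - X 1 ^ 2) := by
    rw [map_mul, e3_symm_gen]; ring
  rw [h]
  exact Ideal.mul_mem_left _ _ (Ideal.subset_span rfl)

lemma nf_eq_zero {a b : Rxw} (h : nf a b = 0) : a = 0 ∧ b = 0 := by
  rw [nf, Ideal.Quotient.eq_zero_iff_mem, Ideal.mem_span_singleton'] at h
  obtain ⟨q, hq⟩ := h
  have h2 : Polynomial.C a + Polynomial.C b * Polynomial.X = (-(e3 q)) * gpol := by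
    have := congrArg e3 hq
    rw [map_mul, AlgEquiv.apply_symm_apply, map_sub, map_mul, map_pow,
      e3_X0, e3_X1, e3_X2] at this
    rw [← this, gpol, Polynomial.C_mul]; ring
  by_cases hq0 : (-(e3 q)) = 0
  · rw [hq0, zero_mul] at h2
    constructor
    · have := congrArg (fun p => Polynomial.coeff p 0) h2
      simpa using this
    · have := congrArg (fun p => Polynomial.coeff p 1) h2
      simpa using this
  · exfalso
    have hle : (Polynomial.C a + Polynomial.C b * Polynomial.X).degree ≤ 1 := by
      compute_degree
    have hge : (2 : WithBot ℕ) ≤ ((-(e3 q)) * gpol).degree := by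
      rw [gpol_monic.degree_mul, gpol_degree]
      have h0 : (0 : WithBot ℕ) ≤ (-(e3 q)).degree :=
        Polynomial.zero_le_degree_iff.mpr hq0
      calc (2 : WithBot ℕ) = 0 + 2 := by simp
        _ ≤ (-(e3 q)).degree + 2 := by exact add_le_add h0 le_rfl
    rw [← h2] at hge
    exact absurd (hge.trans hle) (by norm_num)

lemma exists_nf (s : S) : ∃ a b : Rxw, s = nf a b := by
  obtain ⟨p, rfl⟩ := Ideal.Quotient.mk_surjective s
  set r := e3 p %ₘ gpol with hrdef
  refine ⟨r.coeff 0, r.coeff 1, ?_⟩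
  have hdeg : r.degree ≤ 1 := by
    have := Polynomial.degree_modByMonic_lt (e3 p) gpol_monic
    rw [gpol_degree] at this
    exact Order.le_of_lt_succ (by exact_mod_cast this)
  have hr : r = Polynomial.C (r.coeff 1) * Polynomial.X + Polynomial.C (r.coeff 0) :=
    Polynomial.eq_X_add_C_of_degree_le_one hdeg
  have hsub : e3 p = gpol * (e3 p /ₘ gpol) + r := by
    have := (Polynomial.modByMonic_add_div (e3 p) gpol)
    linear_combination -this
  have hp : p = e3.symm (gpol * (e3 p /ₘ gpol)) + e3.symm r := by
    apply e3.injective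
    rw [map_add, AlgEquiv.apply_symm_apply, AlgEquiv.apply_symm_apply, ← hsub]
  rw [hp, map_add, mk_e3_g_mul, zero_add, nf]
  congr 2
  conv_lhs => rw [hr]
  ring

lemma nf_sub (a b a' b' : Rxw) : nf a b - nf a' b' = nf (a - a') (b - b') := by
  simp only [nf, ← map_sub (Ideal.Quotient.mk _), ← map_sub e3.symm]
  congr 2
  rw [Polynomial.C_sub, Polynomial.C_sub]; ring

lemma nf_injective {a b a' b' : Rxw} (h : nf a b = nf a' b') : a = a' ∧ b = b' := by
  have h0 : nf (a - a') (b - b') = 0 := by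
    rw [← nf_sub, h, sub_self]
  obtain ⟨h1, h2⟩ := nf_eq_zero h0
  exact ⟨sub_eq_zero.mp h1, sub_eq_zero.mp h2⟩

lemma nf_zero : nf 0 0 = 0 := by
  simp [nf]

lemma xx_nf (a b : Rxw) : xx * nf a b = nf (X 0 * a) (X 0 * b) := by
  rw [xx, nf, nf, ← map_mul]
  congr 1
  have hx : (X 0 : MvPolynomial (Fin 3) ℂ) = e3.symm (Polynomial.C (X 0)) := by
    apply e3.injective; rw [AlgEquiv.apply_symm_apply, e3_X0]
  rw [hx, ← map_mul]
  congr 1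
  rw [Polynomial.C_mul, Polynomial.C_mul]; ring

lemma ww_nf (a b : Rxw) : ww * nf a b = nf (X 1 * a) (X 1 * b) := by
  rw [ww, nf, nf, ← map_mul]
  congr 1
  have hw : (X 2 : MvPolynomial (Fin 3) ℂ) = e3.symm (Polynomial.C (X 1)) := by
    apply e3.injective; rw [AlgEquiv.apply_symm_apply, e3_X2]
  rw [hw, ← map_mul]
  congr 1
  rw [Polynomial.C_mul, Polynomial.C_mul]; ring

lemma yy_nf (a b : Rxw) : yy * nf a b = nf (X 0 * X 1 * b) a := by
  rw [yy, nf, ← map_mul]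
  have hy : (X 1 : MvPolynomial (Fin 3) ℂ) = e3.symm Polynomial.X := by
    apply e3.injective; rw [AlgEquiv.apply_symm_apply, e3_X1]
  rw [show X 1 * e3.symm (Polynomial.C a + Polynomial.C b * Polynomial.X)
      = e3.symm (Polynomial.X * (Polynomial.C a + Polynomial.C b * Polynomial.X)) from by
    rw [map_mul, ← hy]]
  have hsplit : Polynomial.X * (Polynomial.C a + Polynomial.C b * Polynomial.X)
      = (Polynomial.C (X 0 * X 1 * b) + Polynomial.C a * Polynomial.X) + gpol * Polynomial.C b := by
    rw [gpol, Polynomial.C_mul, Polynomial.C_mul]; ring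
  rw [hsplit, map_add, map_add, mk_e3_g_mul, add_zero, nf]

lemma hxw : xx * ww = yy ^ 2 := by
  rw [xx, yy, ww, ← map_mul, ← map_pow]
  exact (Ideal.Quotient.mk_eq_mk_iff_sub_mem _ _).mpr (Ideal.subset_span rfl)

lemma xx_regular {s : S} (h : xx * s = 0) : s = 0 := by
  obtain ⟨a, b, rfl⟩ := exists_nf s
  rw [xx_nf] at h
  obtain ⟨ha, hb⟩ := nf_eq_zero h
  have hX : (X 0 : Rxw) ≠ 0 := MvPolynomial.X_ne_zero 0
  rw [mul_eq_zero] at ha hb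
  rw [ha.resolve_left hX, hb.resolve_left hX, nf_zero]

lemma X0_prime : Prime (X 0 : Rxw) := by
  rw [← MulEquiv.prime_iff (MvPolynomial.finSuccEquiv ℂ 1).toMulEquiv]
  have hx : (MvPolynomial.finSuccEquiv ℂ 1).toMulEquiv (X 0) = Polynomial.X := finSuccEquiv_X_zero
  rw [hx]
  exact Polynomial.prime_X

lemma X0_not_dvd_X1 : ¬ (X 0 : Rxw) ∣ X 1 := by
  rintro ⟨q, hq⟩
  have := congrArg (eval (fun i : Fin 2 => if i = 0 then 0 else 1)) hq
  simp at this

/-! ### The two dual functionals -/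

def E : (Fin 4 → S) →ₗ[S] S :=
  xx • LinearMap.proj 0 + yy • LinearMap.proj 1 + ww • LinearMap.proj 2

lemma hE : LinearMap.range relMap ≤ LinearMap.ker E := by
  rintro _ ⟨v, rfl⟩
  simp only [LinearMap.mem_ker, E, relMap, Matrix.toLin'_apply, relMatrix,
    LinearMap.add_apply, LinearMap.smul_apply, LinearMap.proj_apply,
    Matrix.mulVec, dotProduct, Fin.sum_univ_four, smul_eq_mul]
  simp [Matrix.vecHead, Matrix.vecTail]
  linear_combination (v 1 - v 2) * hxw

lemma hP3 : LinearMap.range relMap ≤ LinearMap.ker (LinearMap.proj 3 : (Fin 4 → S) →ₗ[S] S) := by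
  rintro _ ⟨v, rfl⟩
  simp only [LinearMap.mem_ker, relMap, Matrix.toLin'_apply, relMatrix,
    LinearMap.proj_apply, Matrix.mulVec, dotProduct, Fin.sum_univ_four]
  simp [Matrix.vecHead, Matrix.vecTail]

def φ₀ : Module.Dual S M := Submodule.liftQ _ E hE
def ψ₀ : Module.Dual S M := Submodule.liftQ _ (LinearMap.proj 3) hP3

lemma apply_mk (f : Module.Dual S M) (v : Fin 4 → S) :
    f (Submodule.Quotient.mk v) = ∑ i, v i * f (gen i) := by
  have key : (Submodule.Quotient.mk v : M) = ∑ i, v i • gen i := by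
    simp only [gen]
    have hs : ∀ x : Fin 4, (Pi.single x (1:S) : Fin 4 → S) = (fun j => if x = j then 1 else 0) := by
      intro x; funext j; simp [Pi.single_apply, eq_comm]
    conv_lhs => rw [pi_eq_sum_univ v]
    rw [← Submodule.mkQ_apply, map_sum]
    simp [Submodule.mkQ_apply, hs]
  rw [key, map_sum]
  simp_rw [map_smul, smul_eq_mul]

lemma dual_ext {F G : Module.Dual S M} (h : ∀ i, F (gen i) = G (gen i)) : F = G := by
  apply LinearMap.ext; intro m
  obtain ⟨v, rfl⟩ := Submodule.Quotient.mk_surjective _ m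
  rw [apply_mk, apply_mk]
  simp_rw [h]

lemma φ₀_gen : φ₀ (gen 0) = xx ∧ φ₀ (gen 1) = yy ∧ φ₀ (gen 2) = ww ∧ φ₀ (gen 3) = 0 := by
  refine ⟨?_, ?_, ?_, ?_⟩ <;>
    simp [φ₀, gen, Submodule.liftQ_apply, E, Pi.single_apply]

lemma ψ₀_gen : ψ₀ (gen 0) = 0 ∧ ψ₀ (gen 1) = 0 ∧ ψ₀ (gen 2) = 0 ∧ ψ₀ (gen 3) = 1 := by
  refine ⟨?_, ?_, ?_, ?_⟩ <;>
    simp [ψ₀, gen, Submodule.liftQ_apply, Pi.single_apply]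

lemma relation (f : Module.Dual S M) (j : Fin 4) :
    ∑ i, relMatrix i j * f (gen i) = 0 := by
  have hmem : relMap (Pi.single j 1) ∈ LinearMap.range relMap := ⟨_, rfl⟩
  have h0 : f (Submodule.Quotient.mk (relMap (Pi.single j 1))) = 0 := by
    rw [(Submodule.Quotient.mk_eq_zero _).mpr hmem, map_zero]
  rw [apply_mk] at h0
  rw [← h0]
  congr 1
  funext i
  simp only [relMap, Matrix.toLin'_apply, Matrix.mulVec_single_one, Matrix.col_apply]

/-- The dual module `M^∨ = Hom_S(M, S)` is free of rank `2`, with basis the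
functionals `β^∨ : β₀ ↦ x, β₁ ↦ y, β₂ ↦ w, γ ↦ 0` and `γ^∨ : βᵢ ↦ 0, γ ↦ 1`. -/
theorem dual_module_free_rank_two :
    ∃ φ ψ : Module.Dual S M,
      φ (gen 0) = xx ∧ φ (gen 1) = yy ∧ φ (gen 2) = ww ∧ φ (gen 3) = 0 ∧
      ψ (gen 0) = 0 ∧ ψ (gen 1) = 0 ∧ ψ (gen 2) = 0 ∧ ψ (gen 3) = 1 ∧
      ∃ B : Module.Basis (Fin 2) S (Module.Dual S M), B 0 = φ ∧ B 1 = ψ := by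
  obtain ⟨hφ0, hφ1, hφ2, hφ3⟩ := φ₀_gen
  obtain ⟨hψ0, hψ1, hψ2, hψ3⟩ := ψ₀_gen
  refine ⟨φ₀, ψ₀, hφ0, hφ1, hφ2, hφ3, hψ0, hψ1, hψ2, hψ3, ?_⟩
  -- linear independence
  have li : LinearIndependent S ![φ₀, ψ₀] := by
    rw [LinearIndependent.pair_iff]
    intro s t hst
    have h3 : s * φ₀ (gen 3) + t * ψ₀ (gen 3) = 0 := by
      have := congrArg (fun F : Module.Dual S M => F (gen 3)) hst
      simpa using this
    rw [hφ3, hψ3, mul_zero, zero_add, mul_one] at h3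
    have h0 : s * φ₀ (gen 0) + t * ψ₀ (gen 0) = 0 := by
      have := congrArg (fun F : Module.Dual S M => F (gen 0)) hst
      simpa using this
    rw [hφ0, hψ0, mul_zero, add_zero] at h0
    have hs : s = 0 := xx_regular (by rw [mul_comm]; exact h0)
    exact ⟨hs, h3⟩
  -- spanning
  have span : ⊤ ≤ Submodule.span S (Set.range ![φ₀, ψ₀]) := by
    intro f _
    have hrange : Set.range ![φ₀, ψ₀] = {φ₀, ψ₀} := by
      ext g
      simp [Matrix.range_cons, Matrix.range_empty, Set.mem_insert_iff]
      tauto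
    rw [hrange, Submodule.mem_span_pair]
    -- normal forms of the values
    obtain ⟨a₀, b₀, h₀⟩ := exists_nf (f (gen 0))
    obtain ⟨a₁, b₁, h₁⟩ := exists_nf (f (gen 1))
    obtain ⟨a₂, b₂, h₂⟩ := exists_nf (f (gen 2))
    have rel0 := relation f 0
    have rel2 := relation f 2
    rw [Fin.sum_univ_four] at rel0 rel2
    simp [relMatrix, Matrix.vecHead, Matrix.vecTail] at rel0 rel2
    -- rel0 : yy * f(gen 0) - xx * f(gen 1) = 0 (up to normalization)
    have e0 : yy * f (gen 0) = xx * f (gen 1) := by linear_combination rel0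
    have e2 : yy * f (gen 1) = xx * f (gen 2) := by linear_combination rel2
    rw [h₀, h₁, yy_nf, xx_nf] at e0
    rw [h₁, h₂, yy_nf, xx_nf] at e2
    obtain ⟨e0a, e0b⟩ := nf_injective e0
    obtain ⟨e2a, e2b⟩ := nf_injective e2
    have hX : (X 0 : Rxw) ≠ 0 := MvPolynomial.X_ne_zero 0
    -- a₁ = X1 * b₀
    have ha₁ : a₁ = X 1 * b₀ := by
      apply mul_left_cancel₀ hX
      rw [← e0a]; ring
    have ha₂ : a₂ = X 1 * b₁ := by
      apply mul_left_cancel₀ hX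
      rw [← e2a]; ring
    -- X 0 ∣ b₀
    have hdvd : (X 0 : Rxw) ∣ b₀ := by
      have h1 : (X 0 : Rxw) ∣ X 1 * b₀ := ⟨b₂, by rw [← ha₁, e2b]⟩
      exact (X0_prime.dvd_mul.mp h1).resolve_left X0_not_dvd_X1
    obtain ⟨t, ht⟩ := hdvd
    have hb₂ : b₂ = X 1 * t := by
      apply mul_left_cancel₀ hX
      rw [← e2b, ha₁, ht]; ring
    refine ⟨nf b₁ t, f (gen 3), ?_⟩
    apply dual_ext
    intro i
    have happ : ∀ i : Fin 4, (nf b₁ t • φ₀ + f (gen 3) • ψ₀) (gen i)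
        = nf b₁ t * φ₀ (gen i) + f (gen 3) * ψ₀ (gen i) := by
      intro i; simp
    rw [happ]
    fin_cases i
    · show nf b₁ t * φ₀ (gen 0) + f (gen 3) * ψ₀ (gen 0) = f (gen 0)
      rw [hφ0, hψ0, mul_zero, add_zero, mul_comm, xx_nf, h₀, e0b, ht]
    · show nf b₁ t * φ₀ (gen 1) + f (gen 3) * ψ₀ (gen 1) = f (gen 1)
      rw [hφ1, hψ1, mul_zero, add_zero, mul_comm, yy_nf, h₁, ha₁, ht]
      congr 1; ring
    · show nf b₁ t * φ₀ (gen 2) + f (gen 3) * ψ₀ (gen 2) = f (gen 2)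
      rw [hφ2, hψ2, mul_zero, add_zero, mul_comm, ww_nf, h₂, ha₂, hb₂]
    · show nf b₁ t * φ₀ (gen 3) + f (gen 3) * ψ₀ (gen 3) = f (gen 3)
      rw [hφ3, hψ3, mul_zero, zero_add, mul_one]
  refine ⟨Module.Basis.mk li span, ?_, ?_⟩
  · rw [Module.Basis.mk_apply]; rfl
  · rw [Module.Basis.mk_apply]; rfl
end
end
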